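/- arXiv:1604.00115 — 4 statements merged into one kernel-verified Lean document; each statement's English description precedes it below -/
import Mathlib

section
/- Let k be a field and let F = Z·X² + (a₀₁₁Y² + a₀₁₂YZ + a₀₂₂Z²)·X + (a₁₁₁Y³ + a₁₁₂Y²Z + a₁₂₂YZ² + a₂₂₂Z³) be a ternary cubic form over k. Let s,t,u ∈ k with u ≠ 0 and F(s,t,u) = 0. Set Q(t,u) = a₀₁₁t² + a₀₁₂tu + a₀₂₂u², L₁(X,Y,Z) = u²a₀₁₁X + u²a₁₁₁Y + u(a₁₁₁t + a₁₁₂u)Z, and L₂(X,Y,Z) = u(a₀₁₁t + a₀₁₂u)X + (a₁₁₁t² + a₁₁₂tu + a₁₂₂u²)Z. Then the 3×3 matrix M_P with rows (0, Z, −Y), (uY − tZ, 0, −u²X − (Q(t,u) + su)Z), (uX − sZ, L₁(X,Y,Z), L₂(X,Y,Z)) satisfies det(M_P) = −u³·F(X,Y,Z) as polynomials in k[X,Y,Z]. In particular, M_P is a linear determinantal representation of the cubic defined by F over k. -/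
open MvPolynomial Matrix

/-- A ternary cubic form `F` defines a smooth plane cubic if it is homogeneous of
degree 3 and `F` together with its three partial derivatives have no common zero
other than the origin over an algebraic closure of `k`. -/
def IsSmoothCubic (k : Type) [Field k] (F : MvPolynomial (Fin 3) k) : Prop :=
  F.IsHomogeneous 3 ∧
    ∀ p : Fin 3 → AlgebraicClosure k,
      (MvPolynomial.aeval p) F = 0 →
      (∀ i : Fin 3, (MvPolynomial.aeval p) (MvPolynomial.pderiv i F) = 0) →
      p = 0

/-- Nonzero solutions of `F = 0` in `k³`. -/
def Sol (k : Type) [Field k] (F : MvPolynomial (Fin 3) k) : Type :=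
  {v : Fin 3 → k // v ≠ 0 ∧ MvPolynomial.eval v F = 0}

/-- Two nonzero solutions give the same projective point iff they differ by a
nonzero scalar. -/
def PointRel (k : Type) [Field k] (F : MvPolynomial (Fin 3) k) (v w : Sol k F) : Prop :=
  ∃ c : kˣ, w.val = c • v.val

/-- The set `C(k)` of `k`-rational points of the plane cubic defined by `F`. -/
def RatPoint (k : Type) [Field k] (F : MvPolynomial (Fin 3) k) : Type :=
  Quot (PointRel k F)

/-- The matrix of linear forms `X·M₀ + Y·M₁ + Z·M₂` attached to a triple of
`3×3` matrices over `k`. -/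
noncomputable def linMat (k : Type) [Field k] (M : Fin 3 → Matrix (Fin 3) (Fin 3) k) :
    Matrix (Fin 3) (Fin 3) (MvPolynomial (Fin 3) k) :=
  fun i j => ∑ m : Fin 3, MvPolynomial.X m * MvPolynomial.C (M m i j)

/-- A triple `M₀, M₁, M₂` of matrices is a linear determinantal representation of
the cubic defined by `F` if `F = λ · det (X·M₀ + Y·M₁ + Z·M₂)` for some `λ ∈ k^×`. -/
def IsLDR (k : Type) [Field k] (F : MvPolynomial (Fin 3) k)
    (M : Fin 3 → Matrix (Fin 3) (Fin 3) k) : Prop :=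
  ∃ lam : k, lam ≠ 0 ∧ F = MvPolynomial.C lam * (linMat k M).det

/-- Two linear determinantal representations are equivalent if `M' = A·M·B` for
invertible matrices `A, B ∈ GL₃(k)`. -/
def LDRRel (k : Type) [Field k] (F : MvPolynomial (Fin 3) k)
    (M M' : {M : Fin 3 → Matrix (Fin 3) (Fin 3) k // IsLDR k F M}) : Prop :=
  ∃ A B : GL (Fin 3) k, ∀ m : Fin 3,
    M'.val m = (A : Matrix (Fin 3) (Fin 3) k) * M.val m * (B : Matrix (Fin 3) (Fin 3) k)

/-- The set `LDR(C)` of equivalence classes of linear determinantal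
representations of the cubic defined by `F`. -/
def LDRcl (k : Type) [Field k] (F : MvPolynomial (Fin 3) k) : Type :=
  Quot (LDRRel k F)

/-- Two plane cubics are projectively equivalent if a linear change of projective
coordinates carries one defining form to a nonzero scalar multiple of the other. -/
def ProjEquiv (k : Type) [Field k] (F F' : MvPolynomial (Fin 3) k) : Prop :=
  ∃ (T : GL (Fin 3) k) (μ : k), μ ≠ 0 ∧
    F' = MvPolynomial.C μ *
      (MvPolynomial.aeval fun j => ∑ i : Fin 3,
        MvPolynomial.C ((T : Matrix (Fin 3) (Fin 3) k) i j) * MvPolynomial.X i) F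

theorem stmt2 (k : Type) [Field k]
    (a011 a012 a022 a111 a112 a122 a222 s t u : k) (hu : u ≠ 0)
    (F : MvPolynomial (Fin 3) k)
    (hF : F = X 2 * X 0 ^ 2
        + (C a011 * X 1 ^ 2 + C a012 * X 1 * X 2 + C a022 * X 2 ^ 2) * X 0
        + (C a111 * X 1 ^ 3 + C a112 * X 1 ^ 2 * X 2 + C a122 * X 1 * X 2 ^ 2
            + C a222 * X 2 ^ 3))
    (hP : MvPolynomial.eval ![s, t, u] F = 0)
    (M : Matrix (Fin 3) (Fin 3) (MvPolynomial (Fin 3) k))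
    (hM : M = !![(0 : MvPolynomial (Fin 3) k), X 2, -X 1;
        C u * X 1 - C t * X 2, 0,
          -(C (u ^ 2) * X 0)
            - C (a011 * t ^ 2 + a012 * t * u + a022 * u ^ 2 + s * u) * X 2;
        C u * X 0 - C s * X 2,
          C (u ^ 2 * a011) * X 0 + C (u ^ 2 * a111) * X 1
            + C (u * (a111 * t + a112 * u)) * X 2,
          C (u * (a011 * t + a012 * u)) * X 0
            + C (a111 * t ^ 2 + a112 * t * u + a122 * u ^ 2) * X 2]) :
    M.det = C (-u ^ 3) * F ∧ ∃ lam : k, lam ≠ 0 ∧ F = C lam * M.det := by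
  have h : u * s ^ 2 + (a011 * t ^ 2 + a012 * t * u + a022 * u ^ 2) * s
      + (a111 * t ^ 3 + a112 * t ^ 2 * u + a122 * t * u ^ 2 + a222 * u ^ 3) = 0 := by
    rw [hF] at hP
    simp only [_root_.map_add, _root_.map_mul, _root_.map_pow, MvPolynomial.eval_X,
      MvPolynomial.eval_C, Matrix.cons_val_zero, Matrix.cons_val_one, Matrix.head_cons,
      Matrix.cons_val_two, Matrix.tail_cons] at hP
    linear_combination hP
  have h2 : ((C u : MvPolynomial (Fin 3) k) * C s ^ 2
      + (C a011 * C t ^ 2 + C a012 * C t * C u + C a022 * C u ^ 2) * C s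
      + (C a111 * C t ^ 3 + C a112 * C t ^ 2 * C u + C a122 * C t * C u ^ 2
        + C a222 * C u ^ 3)) = 0 := by
    have := congrArg (MvPolynomial.C : k →+* MvPolynomial (Fin 3) k) h
    simpa only [_root_.map_add, _root_.map_mul, _root_.map_pow, map_zero] using this
  have hdet : M.det = C (-u ^ 3) * F := by
    rw [hM, hF, Matrix.det_fin_three]
    simp only [Matrix.of_apply, Matrix.cons_val', Matrix.cons_val_zero, Matrix.cons_val_one,
      Matrix.head_cons, Matrix.empty_val', Matrix.cons_val_fin_one, Matrix.head_fin_const,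
      Matrix.cons_val_two, Matrix.tail_cons, _root_.map_add, _root_.map_mul, _root_.map_pow,
      map_neg]
    linear_combination (X 2 : MvPolynomial (Fin 3) k) ^ 3 * h2
  refine ⟨hdet, -(u ^ 3)⁻¹, by simp [hu], ?_⟩
  rw [hdet, ← mul_assoc, ← MvPolynomial.C_mul]
  have : -(u ^ 3)⁻¹ * -u ^ 3 = 1 := by field_simp
  rw [this, MvPolynomial.C_1, one_mul]
end

section
/- Let k be a field and let F = Z·X² + (a₀₁₁Y² + a₀₁₂YZ + a₀₂₂Z²)·X + (a₁₁₁Y³ + a₁₁₂Y²Z + a₁₂₂YZ² + a₂₂₂Z³) be a ternary cubic form over k with a₀₁₁ ≠ 0. Set L̃₁(X,Y,Z) = a₁₁₁X + (a₀₁₂a₁₁₁ − a₀₁₁a₁₁₂)Y and L̃₂(X,Y,Z) = (a₀₂₂a₁₁₁ − a₀₁₁a₁₂₂)Y − a₀₁₁a₂₂₂Z. Then the 3×3 matrix M_P with rows (0, Z, −Y), (Z, a₀₁₁Y, X + a₀₁₂Y + a₀₂₂Z), (a₀₁₁X + a₁₁₁Y, L̃₁(X,Y,Z), L̃₂(X,Y,Z))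 satisfies det(M_P) = a₀₁₁·F(X,Y,Z) as polynomials in k[X,Y,Z]. In particular, M_P is a linear determinantal representation of the cubic defined by F over k. -/
set_option maxHeartbeats 1000000
open MvPolynomial Matrix

theorem stmt3 (k : Type) [Field k]
    (a011 a012 a022 a111 a112 a122 a222 : k) (ha : a011 ≠ 0)
    (F : MvPolynomial (Fin 3) k)
    (hF : F = X 2 * X 0 ^ 2
        + (C a011 * X 1 ^ 2 + C a012 * X 1 * X 2 + C a022 * X 2 ^ 2) * X 0
        + (C a111 * X 1 ^ 3 + C a112 * X 1 ^ 2 * X 2 + C a122 * X 1 * X 2 ^ 2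
            + C a222 * X 2 ^ 3))
    (M : Matrix (Fin 3) (Fin 3) (MvPolynomial (Fin 3) k))
    (hM : M = !![(0 : MvPolynomial (Fin 3) k), X 2, -X 1;
        X 2, C a011 * X 1, X 0 + C a012 * X 1 + C a022 * X 2;
        C a011 * X 0 + C a111 * X 1,
          C a111 * X 0 + C (a012 * a111 - a011 * a112) * X 1,
          C (a022 * a111 - a011 * a122) * X 1 - C (a011 * a222) * X 2]) :
    M.det = C a011 * F ∧ ∃ lam : k, lam ≠ 0 ∧ F = C lam * M.det := by
  subst hF hM
  have hdet : (!![(0 : MvPolynomial (Fin 3) k), X 2, -X 1;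
        X 2, C a011 * X 1, X 0 + C a012 * X 1 + C a022 * X 2;
        C a011 * X 0 + C a111 * X 1,
          C a111 * X 0 + C (a012 * a111 - a011 * a112) * X 1,
          C (a022 * a111 - a011 * a122) * X 1 - C (a011 * a222) * X 2]).det
      = C a011 * (X 2 * X 0 ^ 2
        + (C a011 * X 1 ^ 2 + C a012 * X 1 * X 2 + C a022 * X 2 ^ 2) * X 0
        + (C a111 * X 1 ^ 3 + C a112 * X 1 ^ 2 * X 2 + C a122 * X 1 * X 2 ^ 2
            + C a222 * X 2 ^ 3)) := by
    rw [Matrix.det_fin_three]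
    simp only [Matrix.of_apply, Matrix.cons_val', Matrix.cons_val_zero, Matrix.cons_val_one,
      Matrix.head_cons, Matrix.head_fin_const, Matrix.cons_val_fin_one, Matrix.empty_val',
      Matrix.cons_val_two, Matrix.tail_cons, C_sub, C_mul]
    ring
  refine ⟨hdet, a011⁻¹, inv_ne_zero ha, ?_⟩
  rw [hdet, ← mul_assoc, ← C_mul, inv_mul_cancel₀ ha, C_1, one_mul]
end

section
/- Let k be a field, λ ∈ k, and a₀, a₁, a₂ ∈ k with a₀³ + a₁³ + a₂³ + λa₀a₁a₂ = 0. Then the Moore matrix M''_P with rows (a₀X, a₁Z, a₂Y), (a₁Y, a₂X, a₀Z), (a₂Z, a₀Y, a₁X) satisfies det(M''_P) = a₀a₁a₂ · (X³ + Y³ + Z³ + λXYZ) as polynomials in k[X,Y,Z]. In particular, if a₀a₁a₂ ≠ 0 then M''_P is a linear determinantal representation over k of the Hesse cubic X³ + Y³ + Z³ + λXYZ = 0. -/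
open MvPolynomial Matrix

theorem stmt17 (k : Type) [Field k] (lam a0 a1 a2 : k)
    (h : a0 ^ 3 + a1 ^ 3 + a2 ^ 3 + lam * a0 * a1 * a2 = 0)
    (M : Matrix (Fin 3) (Fin 3) (MvPolynomial (Fin 3) k))
    (hM : M = !![C a0 * X 0, C a1 * X 2, C a2 * X 1;
        C a1 * X 1, C a2 * X 0, C a0 * X 2;
        C a2 * X 2, C a0 * X 1, C a1 * X 0]) :
    M.det = C (a0 * a1 * a2) *
        (X 0 ^ 3 + X 1 ^ 3 + X 2 ^ 3 + C lam * X 0 * X 1 * X 2) ∧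
      (a0 * a1 * a2 ≠ 0 → ∃ c : k, c ≠ 0 ∧
        X 0 ^ 3 + X 1 ^ 3 + X 2 ^ 3 + C lam * X 0 * X 1 * X 2 = C c * M.det) := by
  have h' : (C (a0 ^ 3) + C (a1 ^ 3) + C (a2 ^ 3) + C lam * C a0 * C a1 * C a2 : MvPolynomial (Fin 3) k) = 0 := by
    rw [← _root_.map_mul, ← _root_.map_mul, ← _root_.map_mul, ← map_add, ← map_add, ← map_add, h, map_zero]
  have hdet : M.det = C (a0 * a1 * a2) *
      (X 0 ^ 3 + X 1 ^ 3 + X 2 ^ 3 + C lam * X 0 * X 1 * X 2) := by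
    subst hM
    simp only [Matrix.det_fin_three, Matrix.cons_val', Matrix.cons_val_zero, Matrix.cons_val_one,
      Matrix.head_cons, Matrix.empty_val', Matrix.cons_val_fin_one, Matrix.head_fin_const,
      Matrix.cons_val_two, Matrix.tail_cons, Matrix.of_apply]
    simp only [_root_.map_pow] at h'
    simp only [_root_.map_mul]
    linear_combination (-(X 0 * X 1 * X 2) : MvPolynomial (Fin 3) k) * h'
  refine ⟨hdet, fun hne => ⟨(a0 * a1 * a2)⁻¹, inv_ne_zero hne, ?_⟩⟩
  rw [hdet, ← mul_assoc, ← _root_.map_mul, inv_mul_cancel₀ hne, _root_.map_one, one_mul]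
end

section
/- Let k be a field, a, b ∈ k, and λ, μ ∈ k with μ² = λ³ + aλ + b. Then the 3×3 matrix M'_P with rows (X − λZ, 0, −Y − μZ), (μZ − Y, X + λZ, (a + λ²)Z), (0, Z, −X) satisfies det(M'_P) = Y²Z − X³ − aXZ² − bZ³ as polynomials in k[X,Y,Z]. In particular, M'_P is a linear determinantal representation over k of the plane cubic defined by the Weierstrass equation Y²Z − X³ − aXZ² − bZ³ = 0. -/
open MvPolynomial Matrix

theorem stmt19 (k : Type) [Field k] (a b lam mu : k)
    (h : mu ^ 2 = lam ^ 3 + a * lam + b)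
    (F : MvPolynomial (Fin 3) k)
    (hF : F = X 1 ^ 2 * X 2 - X 0 ^ 3 - C a * X 0 * X 2 ^ 2 - C b * X 2 ^ 3)
    (M : Matrix (Fin 3) (Fin 3) (MvPolynomial (Fin 3) k))
    (hM : M = !![X 0 - C lam * X 2, 0, -X 1 - C mu * X 2;
        C mu * X 2 - X 1, X 0 + C lam * X 2, C (a + lam ^ 2) * X 2;
        0, X 2, -X 0]) :
    M.det = F ∧ ∃ c : k, c ≠ 0 ∧ F = C c * M.det := by
  have hdet : M.det = F := by
    subst hM hF
    rw [Matrix.det_fin_three]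
    simp only [Matrix.cons_val', Matrix.cons_val_zero, Matrix.cons_val_one, Matrix.head_cons,
      Matrix.empty_val', Matrix.cons_val_fin_one, Matrix.head_fin_const, Matrix.cons_val_two,
      Matrix.tail_cons, Matrix.of_apply]
    have h2 : (C (mu^2) : MvPolynomial (Fin 3) k) = C (lam^3 + a*lam + b) := by rw [h]
    have := congrArg (· * X 2 ^ 3) h2
    simp only [map_add, _root_.map_mul, map_pow] at this ⊢
    linear_combination (-1 : MvPolynomial (Fin 3) k) * this
  exact ⟨hdet, 1, one_ne_zero, by simp [hdet]⟩
end
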